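/- Let V be a complex inner product space with conjugation a ↦ ā and unit vector 𝟏 as in the spin factor model, with product a∘b = ⟨a|𝟏⟩b + ⟨b|𝟏⟩a − ⟨a|b̄⟩𝟏. Suppose λ𝟏 + a and μ𝟏 + b, with a, b ⟂ 𝟏, operator commute, i.e. ((λ𝟏+a)∘c)∘(μ𝟏+b) = (λ𝟏+a)∘(c∘(μ𝟏+b)) for all c ∈ V. If there exists c ⟂ 𝟏 with ⟨a|c̄⟩ ≠ 0 (in particular if a ≠ 0 and the conjugation preserves the orthogonal complement of 𝟏 and the pairing (a,c) ↦ ⟨a|c̄⟩ is nondegenerate on 𝟏^⟂), then b ∈ ℂ·a, and hence μ𝟏 + b lies in the linear span of 𝟏 and λ𝟏 + a. -/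

import Mathlib

/-- The spin factor product a∘b = ⟨a|𝟏⟩b + ⟨b|𝟏⟩a − ⟨a|b̄⟩𝟏, where ⟨·|·⟩ is linear
in the first variable (so ⟨a|b⟩ = inner b a in Mathlib's convention). -/
noncomputable def spinMul {V : Type*} [NormedAddCommGroup V] [InnerProductSpace ℂ V]
    (cj : V → V) (one : V) (a b : V) : V :=
  (inner ℂ one a : ℂ) • b + (inner ℂ one b : ℂ) • a - (inner ℂ (cj b) a : ℂ) • one

/-- If λ𝟏 + a and μ𝟏 + b (with a, b ⟂ 𝟏) operator commute in the spin factor, and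
there exists c ⟂ 𝟏 with ⟨a|c̄⟩ ≠ 0, then b ∈ ℂ·a and μ𝟏 + b ∈ span{𝟏, λ𝟏 + a}. -/
theorem spin_operator_commute_linear_dependence {V : Type*} [NormedAddCommGroup V]
    [InnerProductSpace ℂ V]
    (cj : V → V) (one : V)
    (hadd : ∀ a b : V, cj (a + b) = cj a + cj b)
    (hsmul : ∀ (c : ℂ) (a : V), cj (c • a) = (starRingEnd ℂ c) • cj a)
    (hinv : ∀ a : V, cj (cj a) = a)
    (hinner : ∀ a b : V, (inner ℂ (cj a) (cj b) : ℂ) = starRingEnd ℂ (inner ℂ a b : ℂ))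
    (hone : cj one = one) (honen : (inner ℂ one one : ℂ) = 1)
    (hperp : ∀ c : V, (inner ℂ one c : ℂ) = 0 → (inner ℂ one (cj c) : ℂ) = 0)
    (lam mu : ℂ) (a b : V)
    (ha : (inner ℂ one a : ℂ) = 0) (hb : (inner ℂ one b : ℂ) = 0)
    (hcomm : ∀ c : V,
      spinMul cj one (spinMul cj one (lam • one + a) c) (mu • one + b)
        = spinMul cj one (lam • one + a) (spinMul cj one c (mu • one + b)))
    (hnd : ∃ c : V, (inner ℂ one c : ℂ) = 0 ∧ (inner ℂ (cj c) a : ℂ) ≠ 0) :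
    (∃ t : ℂ, b = t • a) ∧
      (mu • one + b) ∈ Submodule.span ℂ ({one, lam • one + a} : Set V) := by
  obtain ⟨c, hc, hca⟩ := hnd
  have key : (inner ℂ (cj c) a : ℂ) • b = (inner ℂ (cj b) c : ℂ) • a := by
    have hsub : ∀ x y : V, cj (x - y) = cj x - cj y := by
      intro x y
      have := hadd (x - y) y
      simp at this
      rw [this]; abel
    have h := hcomm c
    have hcone : (inner ℂ (cj c) one : ℂ) = 0 := by
      rw [← inner_conj_symm]; simp [hperp c hc]
    have hbone : (inner ℂ (cj b) one : ℂ) = 0 := by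
      rw [← inner_conj_symm]; simp [hperp b hb]
    have haone : (inner ℂ (cj a) one : ℂ) = 0 := by
      rw [← inner_conj_symm]; simp [hperp a ha]
    have h1c : (inner ℂ one (cj c) : ℂ) = 0 := hperp c hc
    have h1b : (inner ℂ one (cj b) : ℂ) = 0 := hperp b hb
    simp only [spinMul, hadd, hsmul, hone, inner_add_left, inner_add_right, inner_sub_left, inner_sub_right, hsub,
      inner_smul_left, inner_smul_right, ha, hb, hc, hcone, hbone, haone, h1c, h1b,
      honen, smul_add, smul_sub, smul_smul, map_mul, RingHom.id_apply,
      mul_zero, zero_mul, mul_one, one_mul, zero_smul, smul_zero, add_zero, zero_add,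
      sub_zero, zero_sub, map_zero, starRingEnd_self_apply, Complex.conj_conj] at h
    linear_combination (norm := module) -h
  set α := (inner ℂ (cj c) a : ℂ)
  set β := (inner ℂ (cj b) c : ℂ)
  have hba : b = (α⁻¹ * β) • a := by
    have := congrArg (fun v => α⁻¹ • v) key
    simpa [smul_smul, inv_mul_cancel₀ hca] using this
  refine ⟨⟨α⁻¹ * β, hba⟩, ?_⟩
  have heq : mu • one + b
      = (mu - (α⁻¹ * β) * lam) • one + (α⁻¹ * β) • (lam • one + a) := by
    rw [hba]; module
  rw [heq]
  exact Submodule.add_mem _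
    (Submodule.smul_mem _ _ (Submodule.subset_span (Set.mem_insert _ _)))
    (Submodule.smul_mem _ _ (Submodule.subset_span (Set.mem_insert_of_mem _ rfl)))
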